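/- Let ω : ℝ^× → ℂ^× be a continuous homomorphism (quasi-character) with exponent σ, i.e. |ω(x)| = |x|^σ for all x ∈ ℝ^×. Let f and g be Schwartz functions on ℝ such that f* and g* are also Schwartz functions. Then for every s ∈ ℂ with 0 < Re(s) + σ < 2, the four zeta integrals ζ(f,ω,s), ζ(g,ω,s), ζ(f*,ω^{−1},2−s), ζ(g*,ω^{−1},2−s) converge absolutely and ζ(f,ω,s)·ζ(g*,ω^{−1},2−s) = ζ(f*,ω^{−1},2−s)·ζ(g,ω,s). -/

import Mathlib

noncomputable section

open MeasureTheory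
open scoped Classical

/-- The map `∇ : ℝ → ℝ`, `x ↦ |x|·x`. -/
def nablaR (x : ℝ) : ℝ := |x| * x

/-- The inverse of `∇`: `x ↦ x·|x|^{-1/2}` for `x ≠ 0`, and `0 ↦ 0`. -/
noncomputable def nablaRInv (x : ℝ) : ℝ := if x = 0 then 0 else x / Real.sqrt |x|

/-- A nontrivial continuous unitary additive character of `ℝ`. -/
def IsAddCharacterR (ψ : ℝ → ℂ) : Prop :=
  (∀ x y : ℝ, ψ (x + y) = ψ x * ψ y) ∧ (∀ x : ℝ, ‖ψ x‖ = 1) ∧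
  Continuous ψ ∧ (∃ x : ℝ, ψ x ≠ 1)

/-- The Fourier transform `ĝ(y) = ∫ g(x)ψ(xy) dx` on `ℝ` with Lebesgue measure. -/
noncomputable def fourierR (ψ : ℝ → ℂ) (g : ℝ → ℂ) : ℝ → ℂ :=
  fun y => ∫ x : ℝ, g x * ψ (x * y)

/-- The archimedean `*`-transform `g* = (g ∘ ∇⁻¹)^ ∘ ∇`. -/
noncomputable def starR (ψ : ℝ → ℂ) (g : ℝ → ℂ) : ℝ → ℂ :=
  fun y => fourierR ψ (fun x => g (nablaRInv x)) (nablaR y)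

/-- The integrand `x ↦ h(x)ω(x)|x|^s` of the local zeta integral on `ℝ`, with respect to
the multiplicative Haar measure `d^×x = |x|⁻¹dx` (written against Lebesgue measure). -/
noncomputable def zetaIntegrandR (h ω : ℝ → ℂ) (s : ℂ) : ℝ → ℂ := fun x =>
  if x ≠ 0 then h x * ω x * (((|x| : ℝ) : ℂ) ^ s) * ((|x| : ℝ) : ℂ)⁻¹ else 0

open Set

lemma nablaR_zero_iff {x : ℝ} : nablaR x = 0 ↔ x = 0 := by
  simp [nablaR, mul_eq_zero, abs_eq_zero]

lemma nablaRInv_nablaR (x : ℝ) : nablaRInv (nablaR x) = x := by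
  rcases eq_or_ne x 0 with h | h
  · simp [h, nablaR, nablaRInv]
  · have h1 : nablaR x ≠ 0 := by simp [nablaR_zero_iff, h]
    have h2 : |nablaR x| = x ^ 2 := by
      rw [nablaR, abs_mul, abs_abs, ← abs_mul, ← sq, abs_of_nonneg (sq_nonneg x)]
    rw [nablaRInv, if_neg h1, h2, Real.sqrt_sq_eq_abs, nablaR]
    field_simp

lemma nablaR_nablaRInv (x : ℝ) : nablaR (nablaRInv x) = x := by
  rcases eq_or_ne x 0 with h | h
  · simp [h, nablaR, nablaRInv]
  · have hs : Real.sqrt |x| ≠ 0 := by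
      positivity
    rw [nablaRInv, if_neg h, nablaR, abs_div,
      abs_of_nonneg (Real.sqrt_nonneg _), div_mul_div_comm,
      Real.mul_self_sqrt (abs_nonneg x), mul_comm, mul_div_assoc, div_self (abs_ne_zero.2 h), mul_one]

lemma nablaR_injective : Function.Injective nablaR :=
  Function.LeftInverse.injective nablaRInv_nablaR

lemma nablaR_surjective : Function.Surjective nablaR :=
  Function.RightInverse.surjective nablaR_nablaRInv

lemma nablaR_mul (x y : ℝ) : nablaR (x * y) = nablaR x * nablaR y := by
  simp [nablaR, abs_mul]; ring

lemma nablaR_ne_zero {x : ℝ} (hx : x ≠ 0) : nablaR x ≠ 0 := by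
  simp [nablaR_zero_iff, hx]

lemma measurable_nablaRInv : Measurable nablaRInv := by
  unfold nablaRInv
  apply Measurable.ite (measurableSet_singleton 0) measurable_const
  exact measurable_id.div ((measurable_abs).sqrt)

lemma hasDerivAt_nablaR (x : ℝ) : HasDerivAt nablaR (2 * |x|) x := by
  rcases lt_trichotomy x 0 with h | h | h
  · have hd : HasDerivAt (fun y : ℝ => -(y ^ 2)) (2 * |x|) x := by
      have : HasDerivAt (fun y : ℝ => -(y ^ 2)) (-(↑2 * x ^ (2 - 1))) x := (hasDerivAt_pow 2 x).neg
      convert this using 1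
      simp [abs_of_neg h]
    refine hd.congr_of_eventuallyEq ?_
    filter_upwards [Iio_mem_nhds h] with y hy
    have hy' : y < 0 := hy
    simp only [nablaR, abs_of_neg hy']; ring
  · subst h
    rw [hasDerivAt_iff_tendsto_slope]
    have key : ∀ y : ℝ, y ≠ 0 → slope nablaR 0 y = |y| := by
      intro y hy
      simp only [slope, nablaR, vsub_eq_sub, abs_zero, zero_mul, mul_zero, sub_zero,
        smul_eq_mul]
      rw [mul_comm |y| y, ← mul_assoc, inv_mul_cancel₀ hy, one_mul]
    rw [show (2 : ℝ) * |(0:ℝ)| = 0 by simp]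
    refine Filter.Tendsto.congr' ?_ ((continuous_abs.tendsto' 0 0 (by simp)).mono_left nhdsWithin_le_nhds)
    filter_upwards [self_mem_nhdsWithin] with y hy using (key y hy).symm
  · have hd : HasDerivAt (fun y : ℝ => y ^ 2) (2 * |x|) x := by
      have : HasDerivAt (fun y : ℝ => y ^ 2) (↑2 * x ^ (2 - 1)) x := hasDerivAt_pow 2 x
      convert this using 1
      simp [abs_of_pos h]
    refine hd.congr_of_eventuallyEq ?_
    filter_upwards [Ioi_mem_nhds h] with y hy
    have hy' : 0 < y := hy
    simp only [nablaR, abs_of_pos hy']; ring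

/-- indicator of a function continuous on an open set is measurable -/
lemma measurable_indicator_of_continuousOn {F : ℝ → ℂ} {s : Set ℝ} (hs : IsOpen s)
    (hF : ContinuousOn F s) : Measurable (s.indicator F) := by
  apply measurable_of_isOpen
  intro U hU
  have : s.indicator F ⁻¹' U =
      (s ∩ F ⁻¹' U) ∪ {x | x ∉ s ∧ (0 : ℂ) ∈ U} := by
    ext x
    by_cases hx : x ∈ s <;> simp [Set.indicator_apply, hx]
  rw [this]
  refine MeasurableSet.union ((hF.isOpen_inter_preimage hs hU).measurableSet) ?_
  by_cases h0 : (0 : ℂ) ∈ U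
  · have he : {x : ℝ | x ∉ s ∧ (0 : ℂ) ∈ U} = sᶜ := by ext x; simp [h0]
    rw [he]; exact hs.measurableSet.compl
  · have he : {x : ℝ | x ∉ s ∧ (0 : ℂ) ∈ U} = ∅ := by ext x; simp [h0]
    rw [he]; exact MeasurableSet.empty

lemma zetaIntegrandR_eq_indicator (h ω : ℝ → ℂ) (s : ℂ) :
    zetaIntegrandR h ω s = ({x : ℝ | x ≠ 0}).indicator
      (fun x => h x * ω x * (((|x| : ℝ) : ℂ) ^ s) * ((|x| : ℝ) : ℂ)⁻¹) := by
  funext x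
  by_cases hx : x = 0 <;> simp [zetaIntegrandR, Set.indicator_apply, hx]

lemma continuousOn_cpow_abs (s : ℂ) :
    ContinuousOn (fun x : ℝ => (((|x| : ℝ) : ℂ) ^ s)) {x : ℝ | x ≠ 0} := by
  intro x hx
  have hx : x ≠ 0 := hx
  apply ContinuousAt.continuousWithinAt
  have h1 : ContinuousAt (fun z : ℂ => z ^ s) ((|x| : ℝ) : ℂ) :=
    continuousAt_cpow_const (Complex.ofReal_mem_slitPlane.2 (abs_pos.2 hx))
  have h2 : ContinuousAt (fun y : ℝ => (((|y| : ℝ)) : ℂ)) x :=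
    (Complex.continuous_ofReal.comp continuous_abs).continuousAt
  have h3 := ContinuousAt.comp (f := fun y : ℝ => (((|y| : ℝ)) : ℂ)) h1 h2
  exact h3

lemma zetaIntegrandR_measurable {h ω : ℝ → ℂ} (hh : Continuous h)
    (hω : ContinuousOn ω {x : ℝ | x ≠ 0}) (s : ℂ) :
    Measurable (zetaIntegrandR h ω s) := by
  rw [zetaIntegrandR_eq_indicator]
  apply measurable_indicator_of_continuousOn (isOpen_ne)
  refine ((hh.continuousOn.mul hω).mul (continuousOn_cpow_abs s)).mul ?_
  refine ContinuousOn.inv₀ ((Complex.continuous_ofReal.comp continuous_abs).continuousOn) ?_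
  intro x hx
  exact_mod_cast abs_ne_zero.2 hx

lemma zetaIntegrandR_norm {h ω : ℝ → ℂ} {σ : ℝ}
    (hω_exp : ∀ x : ℝ, x ≠ 0 → ‖ω x‖ = |x| ^ σ) (s : ℂ) {x : ℝ} (hx : x ≠ 0) :
    ‖zetaIntegrandR h ω s x‖ = ‖h x‖ * |x| ^ (s.re + σ - 1) := by
  have hax : (0 : ℝ) < |x| := abs_pos.2 hx
  rw [zetaIntegrandR, if_pos hx]
  rw [norm_mul, norm_mul, norm_mul, norm_inv]
  rw [hω_exp x hx]
  rw [Complex.norm_cpow_eq_rpow_re_of_pos hax]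
  rw [Complex.norm_real, Real.norm_eq_abs, abs_abs]
  rw [mul_assoc, mul_assoc, ← Real.rpow_neg_one |x|, ← Real.rpow_add hax, ← Real.rpow_add hax]
  ring_nf

lemma ae_ne_zero : ∀ᵐ x : ℝ, x ≠ 0 := by
  refine ae_iff.2 ?_
  have : {x : ℝ | ¬x ≠ 0} = {0} := by ext x; simp
  rw [this]
  exact measure_singleton 0

lemma integrable_zetaIntegrandR {h ω : ℝ → ℂ} {σ : ℝ} {s : ℂ}
    (hmeas : Measurable (zetaIntegrandR h ω s))
    (hω_exp : ∀ x : ℝ, x ≠ 0 → ‖ω x‖ = |x| ^ σ)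
    {C₀ C₂ : ℝ} (hC0 : ∀ x : ℝ, ‖h x‖ ≤ C₀) (hC2 : ∀ x : ℝ, |x| ^ (2:ℝ) * ‖h x‖ ≤ C₂)
    (ha : 0 < s.re + σ) (hb : s.re + σ < 2) :
    Integrable (zetaIntegrandR h ω s) := by
  set a := s.re + σ with ha'
  have hC0' : (0:ℝ) ≤ C₀ := le_trans (norm_nonneg _) (hC0 0)
  have hC2' : (0:ℝ) ≤ C₂ := le_trans (by positivity) (hC2 1)
  set φ₁ : ℝ → ℝ := (Ioc (0:ℝ) 1).indicator (fun x => x ^ (a - 1)) with hφ₁def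
  set φ₂ : ℝ → ℝ := (Ioi (1:ℝ)).indicator (fun x => x ^ (a - 3)) with hφ₂def
  have hφ₁i : Integrable φ₁ := by
    rw [hφ₁def, integrable_indicator_iff measurableSet_Ioc]
    have h2 := intervalIntegral.intervalIntegrable_rpow' (a := 0) (b := 1) (r := a-1)
      (by linarith)
    exact h2.1
  have hφ₂i : Integrable φ₂ := by
    rw [hφ₂def, integrable_indicator_iff measurableSet_Ioi]
    exact integrableOn_Ioi_rpow_of_lt (by linarith) one_pos
  have hφ₁nn : ∀ t, 0 ≤ φ₁ t := by
    intro t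
    refine Set.indicator_nonneg (fun y hy => ?_) t
    exact Real.rpow_nonneg (le_of_lt hy.1) _
  have hφ₂nn : ∀ t, 0 ≤ φ₂ t := by
    intro t
    refine Set.indicator_nonneg (fun y hy => ?_) t
    exact Real.rpow_nonneg (le_of_lt (lt_trans one_pos hy)) _
  set D : ℝ → ℝ := fun x => C₀ * φ₁ |x| + C₂ * φ₂ |x| with hDdef
  have habs : ∀ (ψ : ℝ → ℝ) (hψ : ∀ t, t ≤ 0 → ψ t = 0), (fun x : ℝ => ψ |x|) =
      fun x => ψ x + ψ (-x) := by
    intro ψ hψ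
    funext x
    rcases lt_trichotomy x 0 with h | h | h
    · rw [abs_of_neg h, hψ x (le_of_lt h), zero_add]
    · subst h; simp [hψ 0 le_rfl]
    · rw [abs_of_pos h, hψ (-x) (by linarith), add_zero]
  have hφ₁z : ∀ t : ℝ, t ≤ 0 → φ₁ t = 0 := by
    intro t ht
    exact Set.indicator_of_notMem (fun hmem => absurd hmem.1 (not_lt.2 ht)) _
  have hφ₂z : ∀ t : ℝ, t ≤ 0 → φ₂ t = 0 := by
    intro t ht
    exact Set.indicator_of_notMem (fun hmem => by simp only [mem_Ioi] at hmem; linarith) _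
  have hDi : Integrable D := by
    rw [hDdef]
    have e₁ : Integrable (fun x : ℝ => φ₁ |x|) := by
      rw [habs φ₁ hφ₁z]
      refine hφ₁i.add ?_
      have := hφ₁i.comp_mul_left' (R := (-1:ℝ)) (by norm_num)
      simpa using this
    have e₂ : Integrable (fun x : ℝ => φ₂ |x|) := by
      rw [habs φ₂ hφ₂z]
      refine hφ₂i.add ?_
      have := hφ₂i.comp_mul_left' (R := (-1:ℝ)) (by norm_num)
      simpa using this
    exact (e₁.const_mul C₀).add (e₂.const_mul C₂)
  refine Integrable.mono' hDi hmeas.aestronglyMeasurable ?_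
  filter_upwards [ae_ne_zero] with x hx
  rw [zetaIntegrandR_norm hω_exp s hx, ← ha']
  have ht : (0:ℝ) < |x| := abs_pos.2 hx
  rcases le_or_gt |x| 1 with h1 | h1
  · have hφ : φ₁ |x| = |x| ^ (a - 1) := Set.indicator_of_mem (show |x| ∈ Ioc (0:ℝ) 1 from ⟨ht, h1⟩) _
    have : ‖h x‖ * |x| ^ (a - 1) ≤ C₀ * φ₁ |x| := by
      rw [hφ]
      exact mul_le_mul_of_nonneg_right (hC0 x) (Real.rpow_nonneg (le_of_lt ht) _)
    refine le_trans this ?_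
    simp only [hDdef]
    nlinarith [hφ₂nn |x|]
  · have hφ : φ₂ |x| = |x| ^ (a - 3) := Set.indicator_of_mem h1 _
    have hsplit : |x| ^ (a - 1) = |x| ^ (2:ℝ) * |x| ^ (a - 3) := by
      rw [← Real.rpow_add ht]; ring_nf
    have : ‖h x‖ * |x| ^ (a - 1) ≤ C₂ * φ₂ |x| := by
      rw [hφ, hsplit, show ‖h x‖ * (|x| ^ (2:ℝ) * |x| ^ (a-3)) =
        (|x| ^ (2:ℝ) * ‖h x‖) * |x| ^ (a-3) by ring]
      exact mul_le_mul_of_nonneg_right (hC2 x) (Real.rpow_nonneg (le_of_lt ht) _)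
    refine le_trans this ?_
    simp only [hDdef]
    nlinarith [hφ₁nn |x|]

lemma integral_comp_nablaR (φ : ℝ → ℂ) :
    ∫ w, φ w = ∫ x, (2 * |x| : ℝ) • φ (nablaR x) := by
  have h := integral_image_eq_integral_abs_deriv_smul (f := nablaR) (f' := fun x => 2 * |x|)
    (s := univ) MeasurableSet.univ
    (fun x _ => (hasDerivAt_nablaR x).hasDerivWithinAt) nablaR_injective.injOn φ
  rw [image_univ, nablaR_surjective.range_eq, Measure.restrict_univ] at h
  rw [h]
  congr 1
  funext x
  rw [abs_of_nonneg (by positivity : (0:ℝ) ≤ 2 * |x|)]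

lemma integrable_comp_nablaRInv (f : SchwartzMap ℝ ℂ) :
    Integrable (fun w => f (nablaRInv w)) := by
  have h := integrableOn_image_iff_integrableOn_abs_deriv_smul (f := nablaR)
    (f' := fun x => 2 * |x|) (s := univ) MeasurableSet.univ
    (fun x _ => (hasDerivAt_nablaR x).hasDerivWithinAt) nablaR_injective.injOn
    (fun w => f (nablaRInv w))
  rw [image_univ, nablaR_surjective.range_eq, integrableOn_univ, integrableOn_univ] at h
  rw [h]
  have heq : (fun x : ℝ => abs (2 * |x|) • (fun w => f (nablaRInv w)) (nablaR x))
      = fun x : ℝ => (2 * |x| : ℝ) • (f x : ℂ) := by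
    funext x
    show abs (2 * |x|) • (f (nablaRInv (nablaR x)) : ℂ) = (2 * |x| : ℝ) • (f x : ℂ)
    rw [nablaRInv_nablaR, abs_of_nonneg (by positivity : (0:ℝ) ≤ 2 * |x|)]
  rw [heq]
  have hint := f.integrable_pow_mul (μ := volume) 1
  refine Integrable.mono' (hint.const_mul 2) ?_ ?_
  · exact (Continuous.smul (continuous_const.mul continuous_abs) f.continuous).aestronglyMeasurable
  · refine Filter.Eventually.of_forall fun x => ?_
    rw [norm_smul, Real.norm_eq_abs, abs_of_nonneg (by positivity : (0:ℝ) ≤ 2 * |x|)]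
    simp [Real.norm_eq_abs, pow_one, mul_assoc, le_refl]

lemma mult_formula {F G : ℝ → ℂ} (hF : Integrable F) (hG : Integrable G)
    (hFm : Measurable F) (hGm : Measurable G)
    {ψ : ℝ → ℂ} (hψc : Continuous ψ) (hψ1 : ∀ x : ℝ, ‖ψ x‖ = 1) (c : ℝ) :
    ∫ w, F w * (∫ t, G t * ψ (t * (w * c)))
      = ∫ t, G t * (∫ w, F w * ψ (w * (t * c))) := by
  have hmeas : AEStronglyMeasurable (fun p : ℝ × ℝ => F p.1 * (G p.2 * ψ (p.2 * (p.1 * c))))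
      (volume.prod volume) := by
    apply Measurable.aestronglyMeasurable
    exact (hFm.comp measurable_fst).mul ((hGm.comp measurable_snd).mul
      (hψc.measurable.comp (measurable_snd.mul (measurable_fst.mul_const c))))
  have hprod : Integrable (fun p : ℝ × ℝ => F p.1 * (G p.2 * ψ (p.2 * (p.1 * c))))
      (volume.prod volume) := by
    refine Integrable.mono' (hF.norm.mul_prod hG.norm) hmeas ?_
    refine Filter.Eventually.of_forall fun p => ?_
    have h1 : ‖ψ (p.2 * (p.1 * c))‖ = 1 := hψ1 _
    rw [norm_mul, norm_mul, h1, mul_one]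
  have swap := integral_integral_swap (f := fun w t => F w * (G t * ψ (t * (w * c)))) hprod
  calc ∫ w, F w * (∫ t, G t * ψ (t * (w * c)))
      = ∫ w, ∫ t, F w * (G t * ψ (t * (w * c))) := by
        congr 1; funext w; rw [MeasureTheory.integral_const_mul]
    _ = ∫ t, ∫ w, F w * (G t * ψ (t * (w * c))) := swap
    _ = ∫ t, G t * (∫ w, F w * ψ (w * (t * c))) := by
        congr 1; funext t
        have hpt : ∀ w : ℝ, F w * (G t * ψ (t * (w * c))) = G t * (F w * ψ (w * (t * c))) := by
          intro w
          rw [show t * (w * c) = w * (t * c) by ring]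
          ring
        simp_rw [hpt]
        rw [MeasureTheory.integral_const_mul]

lemma phi_symm {ψ : ℝ → ℂ} (hψc : Continuous ψ) (hψ1 : ∀ x : ℝ, ‖ψ x‖ = 1)
    (f g : SchwartzMap ℝ ℂ) (u : ℝ) :
    ∫ x : ℝ, (f x * starR ψ (⇑g) (x * u)) * ((|x| : ℝ) : ℂ)
      = ∫ x : ℝ, (g x * starR ψ (⇑f) (x * u)) * ((|x| : ℝ) : ℂ) := by
  have key : ∀ (h : SchwartzMap ℝ ℂ) (Φ : ℝ → ℂ),
      ∫ x : ℝ, (h x * Φ (nablaR x)) * ((|x| : ℝ) : ℂ)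
        = (2:ℂ)⁻¹ * ∫ w, h (nablaRInv w) * Φ w := by
    intro h Φ
    rw [integral_comp_nablaR (fun w => h (nablaRInv w) * Φ w), ← MeasureTheory.integral_const_mul]
    congr 1
    funext x
    rw [nablaRInv_nablaR, Complex.real_smul]
    push_cast
    ring
  set c := nablaR u with hc
  set F := fun w => f (nablaRInv w) with hF
  set G := fun w => g (nablaRInv w) with hG
  have e1 : ∫ x : ℝ, (f x * starR ψ (⇑g) (x * u)) * ((|x| : ℝ) : ℂ)
      = (2:ℂ)⁻¹ * ∫ w, F w * fourierR ψ G (w * c) := by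
    have : ∀ x : ℝ, starR ψ (⇑g) (x * u) = fourierR ψ G (nablaR x * c) := by
      intro x; rw [starR, nablaR_mul]
    simp_rw [this]
    exact key f (fun w => fourierR ψ G (w * c))
  have e2 : ∫ x : ℝ, (g x * starR ψ (⇑f) (x * u)) * ((|x| : ℝ) : ℂ)
      = (2:ℂ)⁻¹ * ∫ w, G w * fourierR ψ F (w * c) := by
    have : ∀ x : ℝ, starR ψ (⇑f) (x * u) = fourierR ψ F (nablaR x * c) := by
      intro x; rw [starR, nablaR_mul]
    simp_rw [this]
    exact key g (fun w => fourierR ψ F (w * c))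
  rw [e1, e2]
  congr 1
  have hFi : Integrable F := integrable_comp_nablaRInv f
  have hGi : Integrable G := integrable_comp_nablaRInv g
  have hFm : Measurable F := f.continuous.measurable.comp measurable_nablaRInv
  have hGm : Measurable G := g.continuous.measurable.comp measurable_nablaRInv
  have := mult_formula hFi hGi hFm hGm hψc hψ1 c
  simpa [fourierR] using this

lemma integrand_factor {ω : ℝ → ℂ}
    (hω_hom : ∀ x y : ℝ, x ≠ 0 → y ≠ 0 → ω (x * y) = ω x * ω y)
    (hω_ne : ∀ x : ℝ, x ≠ 0 → ω x ≠ 0)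
    (s : ℂ) (h k : ℝ → ℂ) {u : ℝ} (hu : u ≠ 0) (x : ℝ) :
    zetaIntegrandR h ω s x * (((|x| : ℝ) : ℂ) * zetaIntegrandR k (fun y => (ω y)⁻¹) (2 - s) (x * u))
      = ((ω u)⁻¹ * ((|u| : ℝ) : ℂ) ^ (2 - s) * ((|u| : ℝ) : ℂ)⁻¹) *
        ((h x * k (x * u)) * ((|x| : ℝ) : ℂ)) := by
  rcases eq_or_ne x 0 with hx | hx
  · subst hx
    simp [zetaIntegrandR]
  · have hxu : x * u ≠ 0 := mul_ne_zero hx hu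
    have hx0 : ((|x| : ℝ) : ℂ) ≠ 0 := by exact_mod_cast abs_ne_zero.2 hx
    have hu0 : ((|u| : ℝ) : ℂ) ≠ 0 := by exact_mod_cast abs_ne_zero.2 hu
    have hXs : ((|x| : ℝ) : ℂ) ^ s ≠ 0 := by
      simp [Complex.cpow_eq_zero_iff, hx0]
    have hUs : ((|u| : ℝ) : ℂ) ^ s ≠ 0 := by
      simp [Complex.cpow_eq_zero_iff, hu0]
    rw [zetaIntegrandR, zetaIntegrandR]
    rw [if_pos hx, if_pos hxu]
    rw [hω_hom x u hx hu, abs_mul, Complex.ofReal_mul,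
      Complex.mul_cpow_ofReal_nonneg (abs_nonneg x) (abs_nonneg u)]
    rw [Complex.cpow_sub _ _ hx0, Complex.cpow_sub _ _ hu0]
    have hx2 : ((|x| : ℝ) : ℂ) ^ (2 : ℂ) = ((|x| : ℝ) : ℂ) * ((|x| : ℝ) : ℂ) := by
      rw [show (2:ℂ) = ((2:ℕ) : ℂ) by norm_num, Complex.cpow_natCast]; ring
    rw [hx2, mul_inv, mul_inv]
    field_simp [hx0, hu0, hXs, hUs, hω_ne x hx, hω_ne u hu]

lemma prod_eq_double {α β : ℝ → ℂ} (hα : Integrable α) (hβ : Integrable β)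
    (hαm : Measurable α) (hβm : Measurable β) (hα0 : α 0 = 0) :
    (∫ x : ℝ, α x) * (∫ y : ℝ, β y)
      = ∫ u : ℝ, ∫ x : ℝ, α x * (((|x| : ℝ) : ℂ) * β (x * u)) := by
  have hKm : Measurable (fun p : ℝ × ℝ => α p.1 * (((|p.1| : ℝ) : ℂ) * β (p.1 * p.2))) := by
    refine (hαm.comp measurable_fst).mul (Measurable.mul ?_ (hβm.comp (measurable_fst.mul measurable_snd)))
    exact Complex.measurable_ofReal.comp measurable_fst.abs
  have hK : Integrable (fun p : ℝ × ℝ => α p.1 * (((|p.1| : ℝ) : ℂ) * β (p.1 * p.2)))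
      (volume.prod volume) := by
    rw [integrable_prod_iff hKm.aestronglyMeasurable]
    constructor
    · filter_upwards [ae_ne_zero] with x hx
      exact ((hβ.comp_mul_left' hx).const_mul _).const_mul _
    · have he : (fun x : ℝ => ∫ u : ℝ, ‖α x * (((|x| : ℝ) : ℂ) * β (x * u))‖)
          =ᵐ[volume] fun x => ‖α x‖ * ∫ y, ‖β y‖ := by
        filter_upwards [ae_ne_zero] with x hx
        have hpt : ∀ u : ℝ, ‖α x * (((|x| : ℝ) : ℂ) * β (x * u))‖
            = (‖α x‖ * |x|) * ‖β (x * u)‖ := by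
          intro u
          rw [norm_mul, norm_mul, Complex.norm_real, Real.norm_eq_abs, abs_abs]
          ring
        simp_rw [hpt]
        rw [MeasureTheory.integral_const_mul,
          Measure.integral_comp_mul_left (fun y => ‖β y‖) x, smul_eq_mul, abs_inv]
        rw [show ‖α x‖ * |x| * (|x|⁻¹ * ∫ y, ‖β y‖) = (‖α x‖ * (|x| * |x|⁻¹)) * ∫ y, ‖β y‖ by ring,
          mul_inv_cancel₀ (abs_ne_zero.2 hx), mul_one]
      exact (hα.norm.mul_const _).congr he.symm
  have step1 : (∫ x : ℝ, α x) * (∫ y : ℝ, β y)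
      = ∫ x : ℝ, ∫ u : ℝ, α x * (((|x| : ℝ) : ℂ) * β (x * u)) := by
    rw [← MeasureTheory.integral_mul_const]
    congr 1
    funext x
    rcases eq_or_ne x 0 with h | h
    · subst h; simp [hα0]
    · have hcv : (∫ y : ℝ, β y) = ((|x| : ℝ) : ℂ) * ∫ u : ℝ, β (x * u) := by
        rw [Measure.integral_comp_mul_left β x, Complex.real_smul, ← mul_assoc,
          ← Complex.ofReal_mul, abs_inv, mul_inv_cancel₀ (abs_ne_zero.2 h), Complex.ofReal_one,
          one_mul]
      rw [hcv, ← MeasureTheory.integral_const_mul, ← MeasureTheory.integral_const_mul]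
  rw [step1]
  exact integral_integral_swap
    (f := fun x u => α x * (((|x| : ℝ) : ℂ) * β (x * u))) hK

/-- Let `ω` be a quasi-character of `ℝ^×` of exponent `σ`, and let `f, g`
be Schwartz functions whose `*`-transforms are also Schwartz.  Then for every `s` with
`0 < Re(s) + σ < 2` the four zeta integrals converge absolutely and
`ζ(f,ω,s)·ζ(g*,ω⁻¹,2-s) = ζ(f*,ω⁻¹,2-s)·ζ(g,ω,s)`. -/
theorem statement17
    (ψ : ℝ → ℂ) (hψ : IsAddCharacterR ψ)
    (ω : ℝ → ℂ) (σ : ℝ)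
    (hω_hom : ∀ x y : ℝ, x ≠ 0 → y ≠ 0 → ω (x * y) = ω x * ω y)
    (hω_ne : ∀ x : ℝ, x ≠ 0 → ω x ≠ 0)
    (hω_cont : ContinuousOn ω {x : ℝ | x ≠ 0})
    (hω_exp : ∀ x : ℝ, x ≠ 0 → ‖ω x‖ = |x| ^ σ)
    (f g : SchwartzMap ℝ ℂ)
    (hfstar : ∃ f' : SchwartzMap ℝ ℂ, ⇑f' = starR ψ ⇑f)
    (hgstar : ∃ g' : SchwartzMap ℝ ℂ, ⇑g' = starR ψ ⇑g)
    (s : ℂ) (hs₁ : 0 < s.re + σ) (hs₂ : s.re + σ < 2) :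
    Integrable (zetaIntegrandR (⇑f) ω s) ∧
    Integrable (zetaIntegrandR (⇑g) ω s) ∧
    Integrable (zetaIntegrandR (starR ψ ⇑f) (fun x => (ω x)⁻¹) (2 - s)) ∧
    Integrable (zetaIntegrandR (starR ψ ⇑g) (fun x => (ω x)⁻¹) (2 - s)) ∧
    (∫ x : ℝ, zetaIntegrandR (⇑f) ω s x) *
        (∫ x : ℝ, zetaIntegrandR (starR ψ ⇑g) (fun x => (ω x)⁻¹) (2 - s) x)
      = (∫ x : ℝ, zetaIntegrandR (starR ψ ⇑f) (fun x => (ω x)⁻¹) (2 - s) x) *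
        (∫ x : ℝ, zetaIntegrandR (⇑g) ω s x) := by
  obtain ⟨-, hψ1, hψc, -⟩ := hψ
  obtain ⟨f', hf'⟩ := hfstar
  obtain ⟨g', hg'⟩ := hgstar
  rw [← hf', ← hg']
  have bounds : ∀ h : SchwartzMap ℝ ℂ, ∃ C₀ C₂ : ℝ, (∀ x : ℝ, ‖h x‖ ≤ C₀) ∧
      (∀ x : ℝ, |x| ^ (2:ℝ) * ‖h x‖ ≤ C₂) := by
    intro h
    obtain ⟨C₀, -, h0⟩ := h.decay 0 0
    obtain ⟨C₂, -, h2⟩ := h.decay 2 0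
    refine ⟨C₀, C₂, fun x => ?_, fun x => ?_⟩
    · simpa [norm_iteratedFDeriv_zero] using h0 x
    · have h2x := h2 x
      rw [norm_iteratedFDeriv_zero] at h2x
      rw [show |x| ^ (2:ℝ) = ‖x‖ ^ (2:ℕ) by
        rw [Real.norm_eq_abs, ← Real.rpow_natCast]; norm_num]
      exact h2x
  have hω_ne' : ∀ x : ℝ, x ≠ 0 → (ω x)⁻¹ ≠ 0 := fun x hx => inv_ne_zero (hω_ne x hx)
  have hω_cont' : ContinuousOn (fun x => (ω x)⁻¹) {x : ℝ | x ≠ 0} := hω_cont.inv₀ hω_ne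
  have hω_exp' : ∀ x : ℝ, x ≠ 0 → ‖(ω x)⁻¹‖ = |x| ^ (-σ) := by
    intro x hx
    rw [norm_inv, hω_exp x hx, ← Real.rpow_neg (abs_nonneg x)]
  have hre : (2 - s).re + (-σ) = 2 - (s.re + σ) := by
    simp [Complex.sub_re]; ring
  have mk : ∀ h : SchwartzMap ℝ ℂ, Integrable (zetaIntegrandR (⇑h) ω s) := by
    intro h
    obtain ⟨C₀, C₂, b0, b2⟩ := bounds h
    exact integrable_zetaIntegrandR (zetaIntegrandR_measurable h.continuous hω_cont s)
      hω_exp b0 b2 hs₁ hs₂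
  have mk' : ∀ h : SchwartzMap ℝ ℂ,
      Integrable (zetaIntegrandR (⇑h) (fun x => (ω x)⁻¹) (2 - s)) := by
    intro h
    obtain ⟨C₀, C₂, b0, b2⟩ := bounds h
    refine integrable_zetaIntegrandR (zetaIntegrandR_measurable h.continuous hω_cont' (2 - s))
      hω_exp' b0 b2 ?_ ?_ <;> rw [hre] <;> linarith
  refine ⟨mk f, mk g, mk' f', mk' g', ?_⟩
  have hmf := zetaIntegrandR_measurable f.continuous hω_cont s
  have hmg := zetaIntegrandR_measurable g.continuous hω_cont s
  have hmf' := zetaIntegrandR_measurable f'.continuous hω_cont' (2 - s)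
  have hmg' := zetaIntegrandR_measurable g'.continuous hω_cont' (2 - s)
  rw [prod_eq_double (mk f) (mk' g') hmf hmg' (by simp [zetaIntegrandR])]
  rw [mul_comm, prod_eq_double (mk g) (mk' f') hmg hmf' (by simp [zetaIntegrandR])]
  apply integral_congr_ae
  filter_upwards [ae_ne_zero] with u hu
  simp_rw [integrand_factor hω_hom hω_ne s (⇑f) (⇑g') hu,
    integrand_factor hω_hom hω_ne s (⇑g) (⇑f') hu]
  rw [MeasureTheory.integral_const_mul, MeasureTheory.integral_const_mul]
  congr 1
  rw [hf', hg']
  exact phi_symm hψc hψ1 f g u
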